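/- For α > -1 and nonnegative integer n, the smallest eigenvalue λ_s of the positive definite Hankel matrix ((α+1)_{j+k})_{0≤j,k≤n} satisfies λ_s ≥ ( Σ_{ℓ=0}^{n} (ℓ!/(α+1)_ℓ) · L_ℓ^{(α)}(-1)² )^{-1}. -/

import Mathlib

/-- The shifted factorial (Pochhammer symbol) (x)ₙ = x(x+1)⋯(x+n-1). -/
noncomputable def poch (x : ℝ) (n : ℕ) : ℝ := ∏ i ∈ Finset.range n, (x + i)

open Finset Matrix

lemma poch_zero (x : ℝ) : poch x 0 = 1 := by simp [poch]

lemma poch_pos {x : ℝ} (hx : 0 < x) (n : ℕ) : 0 < poch x n := by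
  apply Finset.prod_pos
  intro i _
  positivity

lemma poch_add (x : ℝ) (a b : ℕ) : poch x (a + b) = poch x a * poch (x + a) b := by
  rw [poch, poch, poch, Finset.prod_range_add]
  congr 1
  apply Finset.prod_congr rfl
  intro i _
  push_cast
  ring

lemma poch_succ' (x : ℝ) (n : ℕ) : poch x (n+1) = x * poch (x+1) n := by
  rw [poch, Finset.prod_range_succ']
  rw [poch]
  simp only [Nat.cast_zero, add_zero]
  rw [mul_comm]
  congr 1
  apply Finset.prod_congr rfl
  intro i _
  push_cast
  ring

lemma poch_succ (x : ℝ) (n : ℕ) : poch x (n+1) = poch x n * (x + n) := by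
  rw [poch, poch, Finset.prod_range_succ]

lemma poch_sub_poch (x : ℝ) (j : ℕ) :
    poch x (j+1) - poch (x+1) (j+1) = -(j+1) * poch (x+1) j := by
  rw [poch_succ', poch_succ]
  ring

lemma diffD (f : ℕ → ℝ) (m : ℕ) :
    ∑ k ∈ range (m+2), (-1:ℝ)^k * ((m+1).choose k) * f k
      = ∑ k ∈ range (m+1), (-1:ℝ)^k * (m.choose k) * (f k - f (k+1)) := by
  have A : ∑ k ∈ range (m+2), (-1:ℝ)^k * ((m+1).choose k) * f k
      = (∑ k ∈ range (m+1), (-((-1:ℝ)^k * (m.choose k) * f (k+1))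
          + -((-1:ℝ)^k * (m.choose (k+1)) * f (k+1)))) + f 0 := by
    rw [Finset.sum_range_succ' _ (m+1)]
    congr 1
    · apply Finset.sum_congr rfl
      intro k _
      simp only [Nat.choose_succ_succ, Nat.cast_add]
      ring
    · simp
  have Bq : ∑ k ∈ range (m+1), (-1:ℝ)^k * (m.choose (k+1)) * f (k+1)
      = f 0 - (∑ k ∈ range (m+1), (-1:ℝ)^k * (m.choose k) * f k) := by
    have e2 := Finset.sum_range_succ' (fun k => (-1:ℝ)^k * (m.choose k) * f k) (m+1)
    rw [Finset.sum_range_succ (fun k => (-1:ℝ)^k * (m.choose k) * f k) (m+1)] at e2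
    simp only [Nat.choose_succ_self, Nat.cast_zero, mul_zero, zero_mul, add_zero,
      pow_zero, Nat.choose_zero_right, Nat.cast_one, one_mul] at e2
    have e3 : ∑ k ∈ range (m+1), (-1:ℝ)^(k+1) * (m.choose (k+1)) * f (k+1)
        = -∑ k ∈ range (m+1), (-1:ℝ)^k * (m.choose (k+1)) * f (k+1) := by
      rw [← Finset.sum_neg_distrib]
      exact Finset.sum_congr rfl fun k _ => by ring
    rw [e3] at e2
    linarith
  have C1 : ∑ k ∈ range (m+1), (-1:ℝ)^k * (m.choose k) * (f k - f (k+1))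
      = (∑ k ∈ range (m+1), (-1:ℝ)^k * (m.choose k) * f k)
        - ∑ k ∈ range (m+1), (-1:ℝ)^k * (m.choose k) * f (k+1) := by
    rw [← Finset.sum_sub_distrib]
    exact Finset.sum_congr rfl fun k _ => by ring
  have C2 : ∑ k ∈ range (m+1), (-((-1:ℝ)^k * (m.choose k) * f (k+1))
          + -((-1:ℝ)^k * (m.choose (k+1)) * f (k+1)))
      = -(∑ k ∈ range (m+1), (-1:ℝ)^k * (m.choose k) * f (k+1))
        + -(∑ k ∈ range (m+1), (-1:ℝ)^k * (m.choose (k+1)) * f (k+1)) := by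
    rw [Finset.sum_add_distrib, Finset.sum_neg_distrib, Finset.sum_neg_distrib]
  rw [A, C2, Bq, C1]
  ring

lemma lemA (m : ℕ) : ∀ (c : ℝ) (j : ℕ),
    ∑ k ∈ range (m+1), (-1:ℝ)^k * (m.choose k) * poch (c+k) j
      = (-1:ℝ)^m * (∏ i ∈ range m, ((j:ℝ) - i)) * poch (c+m) (j-m) := by
  induction m with
  | zero =>
    intro c j
    simp [poch]
  | succ m ih =>
    intro c j
    rw [show m+1+1 = m+2 from rfl, diffD (fun k => poch (c+k) j) m]
    cases j with
    | zero =>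
      simp only [poch_zero, sub_self, mul_zero]
      rw [Finset.sum_const_zero]
      rw [Finset.prod_range_succ']
      simp
    | succ j' =>
      have hterm : ∀ k ∈ range (m+1), (-1:ℝ)^k * (m.choose k) * (poch (c+k) (j'+1) - poch (c+((k+1:ℕ):ℝ)) (j'+1))
          = (-(j'+1)) * ((-1:ℝ)^k * (m.choose k) * poch ((c+1)+k) j') := by
        intro k _
        have h := poch_sub_poch (c+k) j'
        have : poch (c+↑(k+1)) (j'+1) = poch ((c+k)+1) (j'+1) := by push_cast; ring_nf
        rw [show ((c:ℝ)+1+k) = (c+k)+1 by ring]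
        push_cast
        rw [show ((c:ℝ)+(k+1)) = (c+k)+1 by ring]
        rw [show poch (c+↑k) (j'+1) - poch (c+↑k+1) (j'+1) = -(↑j'+1) * poch (c+↑k+1) j' from h]
        ring
      rw [Finset.sum_congr rfl hterm, ← Finset.mul_sum, ih (c+1) j']
      rw [Finset.prod_range_succ']
      simp only [Nat.cast_zero, sub_zero, Nat.cast_succ, Nat.succ_sub_succ]
      rw [show ((c:ℝ)+1+m) = c+(m+1) by push_cast; ring]
      rw [Finset.prod_congr rfl (fun i _ => by push_cast; ring_nf : ∀ i ∈ range m, ((j':ℝ)+1-(i+1)) = (j':ℝ)-i)]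
      ring

lemma prod_sub_eq_choose (m : ℕ) : ∀ k ≤ m, ∏ i ∈ range k, ((m:ℝ) - i) = (m.choose k) * (k.factorial) := by
  intro k hk
  induction k with
  | zero => simp
  | succ k ihk =>
    rw [Finset.prod_range_succ, ihk (le_of_lt (Nat.lt_of_succ_le hk))]
    have h1 : (m.choose (k+1)) * (k+1) = m.choose k * (m - k) := Nat.choose_succ_right_eq m k
    have h2 : ((m:ℝ) - k) = ((m - k : ℕ) : ℝ) := by
      rw [Nat.cast_sub (le_of_lt (Nat.lt_of_succ_le hk))]
    have h1' : ((m.choose (k+1)):ℝ) * (k+1) = (m.choose k:ℝ) * ((m-k:ℕ):ℝ) := by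
      exact_mod_cast congrArg (Nat.cast : ℕ → ℝ) h1
    rw [h2, Nat.factorial_succ]
    push_cast
    rw [show (m.choose k:ℝ) * (k.factorial:ℝ) * ((m-k:ℕ):ℝ)
        = (k.factorial:ℝ) * ((m.choose k:ℝ) * ((m-k:ℕ):ℝ)) from by ring, ← h1']
    ring

lemma poch_neg_nat (m k : ℕ) : poch (-(m:ℝ)) k = (-1:ℝ)^k * ∏ i ∈ range k, ((m:ℝ) - i) := by
  rw [poch]
  calc ∏ i ∈ range k, (-(m:ℝ) + i) = ∏ i ∈ range k, ((-1) * ((m:ℝ) - i)) :=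
        Finset.prod_congr rfl fun i _ => by ring
    _ = _ := by rw [Finset.prod_mul_distrib, Finset.prod_const, Finset.card_range]

lemma poch_neg_nat_eq_zero {m k : ℕ} (h : m < k) : poch (-(m:ℝ)) k = 0 := by
  rw [poch]
  apply Finset.prod_eq_zero (Finset.mem_range.mpr h)
  simp

noncomputable def co (α : ℝ) (m k : ℕ) : ℝ :=
  poch (α+1) m * poch (-(m:ℝ)) k / (m.factorial * (poch (α+1) k * k.factorial))

lemma momentPair (α : ℝ) (hα : 0 < α+1) (N m j : ℕ) (hm : m < N) :
    ∑ k ∈ range N, co α m k * poch (α+1) (j + k)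
      = poch (α+1) m / m.factorial *
        ((-1:ℝ)^m * (∏ i ∈ range m, ((j:ℝ) - i)) * poch (α+1+m) (j-m)) := by
  rw [← Finset.sum_subset (Finset.range_subset_range.mpr hm)
      (fun x hx hx2 => by
        have hmx : m < x := by simp only [Finset.mem_range] at hx hx2; omega
        rw [co, poch_neg_nat_eq_zero hmx]; simp)]
  rw [show poch (α+1) m / (m.factorial:ℝ) *
        ((-1:ℝ)^m * (∏ i ∈ range m, ((j:ℝ) - i)) * poch (α+1+m) (j-m))
      = poch (α+1) m / (m.factorial:ℝ) *
        ((-1:ℝ)^m * (∏ i ∈ range m, ((j:ℝ) - i)) * poch ((α+1)+m) (j-m)) from rfl,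
    ← lemA m (α+1) j, Finset.mul_sum]
  apply Finset.sum_congr rfl
  intro k hk
  have hk' : k ≤ m := Nat.lt_succ_iff.mp (Finset.mem_range.mp hk)
  rw [co, poch_neg_nat, prod_sub_eq_choose m k hk',
    show j + k = k + j from Nat.add_comm j k, poch_add]
  have h1 : poch (α+1) k ≠ 0 := ne_of_gt (poch_pos hα k)
  have h2 : (k.factorial:ℝ) ≠ 0 := Nat.cast_ne_zero.mpr k.factorial_ne_zero
  have h3 : (m.factorial:ℝ) ≠ 0 := Nat.cast_ne_zero.mpr m.factorial_ne_zero
  field_simp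

noncomputable def sfac (α : ℝ) (ℓ : ℕ) : ℝ := Real.sqrt (ℓ.factorial / poch (α+1) ℓ)

noncomputable def Bmat (α : ℝ) (n : ℕ) : Matrix (Fin (n+1)) (Fin (n+1)) ℝ :=
  Matrix.of fun ℓ j => sfac α ℓ.1 * co α ℓ.1 j.1

noncomputable def Mmat (α : ℝ) (n : ℕ) : Matrix (Fin (n+1)) (Fin (n+1)) ℝ :=
  Matrix.of fun j k => poch (α+1) (j.1 + k.1)

noncomputable def Gfun (α : ℝ) (ℓ k : ℕ) : ℝ :=
  poch (α+1) ℓ / ℓ.factorial * ((-1:ℝ)^ℓ * (∏ i ∈ range ℓ, ((k:ℝ) - i)) * poch (α+1+ℓ) (k-ℓ))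

lemma BM_apply (α : ℝ) (hα : 0 < α+1) (n : ℕ) (ℓ k : Fin (n+1)) :
    (Bmat α n * Mmat α n) ℓ k = sfac α ℓ.1 * Gfun α ℓ.1 k.1 := by
  rw [Matrix.mul_apply]
  simp only [Bmat, Mmat, Matrix.of_apply]
  calc ∑ j : Fin (n+1), sfac α ℓ.1 * co α ℓ.1 j.1 * poch (α+1) (j.1 + k.1)
      = sfac α ℓ.1 * ∑ j : Fin (n+1), co α ℓ.1 j.1 * poch (α+1) (k.1 + j.1) := by
        rw [Finset.mul_sum]
        exact Finset.sum_congr rfl fun j _ => by rw [Nat.add_comm j.1 k.1]; ring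
    _ = sfac α ℓ.1 * ∑ j ∈ range (n+1), co α ℓ.1 j * poch (α+1) (k.1 + j) := by
        rw [Fin.sum_univ_eq_sum_range (fun j => co α ℓ.1 j * poch (α+1) (k.1 + j))]
    _ = _ := by rw [momentPair α hα (n+1) ℓ.1 k.1 ℓ.isLt, Gfun]

lemma Gfun_eq_zero (α : ℝ) {ℓ k : ℕ} (h : k < ℓ) : Gfun α ℓ k = 0 := by
  rw [Gfun]
  have : ∏ i ∈ range ℓ, ((k:ℝ) - i) = 0 :=
    Finset.prod_eq_zero (Finset.mem_range.mpr h) (by simp)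
  rw [this]
  ring

lemma co_eq_zero (α : ℝ) {m k : ℕ} (h : m < k) : co α m k = 0 := by
  rw [co, poch_neg_nat_eq_zero h]
  simp

lemma ortho (α : ℝ) (hα : 0 < α+1) (n : ℕ) :
    Bmat α n * Mmat α n * (Bmat α n)ᵀ = 1 := by
  have hdiagval : ∀ m : Fin (n+1),
      (Bmat α n * Mmat α n * (Bmat α n)ᵀ) m m = 1 := by
    intro m
    rw [Matrix.mul_apply]
    rw [Finset.sum_eq_single m
      (fun k _ hk => by
        rcases lt_or_gt_of_ne (fun h : k.1 = m.1 => hk (Fin.ext h)) with h | h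
        · rw [BM_apply α hα, Gfun_eq_zero α h]
          ring
        · rw [Matrix.transpose_apply]
          simp only [Bmat, Matrix.of_apply]
          rw [co_eq_zero α h]
          ring)
      (fun h => absurd (Finset.mem_univ m) h)]
    rw [BM_apply α hα, Matrix.transpose_apply]
    simp only [Bmat, Matrix.of_apply, Gfun, co]
    rw [poch_neg_nat, prod_sub_eq_choose m.1 m.1 le_rfl,
      Nat.choose_self, Nat.sub_self, poch_zero]
    have hP : 0 < poch (α+1) m.1 := poch_pos hα m.1
    have hf : (0:ℝ) < m.1.factorial := by exact_mod_cast m.1.factorial_pos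
    have hs : sfac α m.1 * sfac α m.1 = m.1.factorial / poch (α+1) m.1 :=
      Real.mul_self_sqrt (le_of_lt (div_pos hf hP))
    rw [mul_mul_mul_comm, hs]
    have h1 : poch (α+1) m.1 ≠ 0 := ne_of_gt hP
    have h2 : (m.1.factorial:ℝ) ≠ 0 := ne_of_gt hf
    rcases Nat.even_or_odd m.1 with he | ho
    · rw [he.neg_one_pow]
      field_simp
      ring
    · rw [ho.neg_one_pow]
      field_simp
      ring
  have hzero : ∀ ℓ m : Fin (n+1), m < ℓ →
      (Bmat α n * Mmat α n * (Bmat α n)ᵀ) ℓ m = 0 := by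
    intro ℓ m hlt
    rw [Matrix.mul_apply]
    apply Finset.sum_eq_zero
    intro k _
    rcases lt_or_ge k.1 ℓ.1 with h | h
    · rw [BM_apply α hα, Gfun_eq_zero α h]
      ring
    · rw [Matrix.transpose_apply]
      simp only [Bmat, Matrix.of_apply]
      rw [co_eq_zero α (lt_of_lt_of_le hlt h)]
      ring
  have hsymm : (Bmat α n * Mmat α n * (Bmat α n)ᵀ)ᵀ = Bmat α n * Mmat α n * (Bmat α n)ᵀ := by
    rw [Matrix.transpose_mul, Matrix.transpose_mul, Matrix.transpose_transpose]
    rw [show (Mmat α n)ᵀ = Mmat α n from by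
      ext i j; simp [Mmat, Matrix.transpose_apply, Nat.add_comm]]
    rw [Matrix.mul_assoc]
  ext i j
  rcases lt_trichotomy i j with h | h | h
  · rw [Matrix.one_apply_ne (ne_of_lt h), ← hsymm, Matrix.transpose_apply, hzero j i h]
  · subst h; rw [Matrix.one_apply_eq, hdiagval]
  · rw [Matrix.one_apply_ne (ne_of_gt h), hzero i j h]

/-- The Laguerre polynomial L_ℓ^{(α)} evaluated at x = -1:
L_ℓ^{(α)}(x) = ((α+1)_ℓ/ℓ!) Σ_{k=0}^{ℓ} (-ℓ)_k x^k / ((α+1)_k k!). -/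
noncomputable def laguerreAtNegOne (α : ℝ) (ℓ : ℕ) : ℝ :=
  poch (α+1) ℓ / (Nat.factorial ℓ : ℝ) *
    ∑ k ∈ Finset.range (ℓ+1),
      poch (-(ℓ:ℝ)) k * (-1:ℝ)^k / (poch (α+1) k * (Nat.factorial k : ℝ))

lemma abs_co (α : ℝ) (hα : 0 < α+1) (ℓ j : ℕ) : |co α ℓ j| = (-1:ℝ)^j * co α ℓ j := by
  have hprod : 0 ≤ ∏ i ∈ range j, ((ℓ:ℝ) - i) := by
    rcases le_or_gt j ℓ with h | h
    · apply Finset.prod_nonneg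
      intro i hi
      have : i < ℓ := lt_of_lt_of_le (Finset.mem_range.mp hi) h
      have : (i:ℝ) ≤ ℓ := by exact_mod_cast le_of_lt this
      linarith
    · rw [Finset.prod_eq_zero (Finset.mem_range.mpr h) (by simp)]
  have hnn : 0 ≤ (-1:ℝ)^j * co α ℓ j := by
    rw [co, poch_neg_nat]
    have h1 : 0 < poch (α+1) ℓ := poch_pos hα ℓ
    have h2 : 0 < poch (α+1) j := poch_pos hα j
    have h3 : (0:ℝ) < ℓ.factorial := by exact_mod_cast ℓ.factorial_pos
    have h4 : (0:ℝ) < j.factorial := by exact_mod_cast j.factorial_pos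
    rw [show (-1:ℝ)^j * (poch (α+1) ℓ * ((-1:ℝ)^j * ∏ i ∈ range j, ((ℓ:ℝ) - i)) /
        (ℓ.factorial * (poch (α+1) j * j.factorial)))
      = ((-1:ℝ)^j * (-1:ℝ)^j) * (poch (α+1) ℓ * (∏ i ∈ range j, ((ℓ:ℝ) - i)) /
        (ℓ.factorial * (poch (α+1) j * j.factorial))) from by ring,
      ← pow_add, Even.neg_one_pow ⟨j, rfl⟩, one_mul]
    positivity
  rw [← abs_of_nonneg hnn, abs_mul, abs_pow, abs_neg, abs_one, one_pow, one_mul]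

lemma rowsum (α : ℝ) (hα : 0 < α+1) (n ℓ : ℕ) (hℓ : ℓ < n+1) :
    ∑ j ∈ range (n+1), |co α ℓ j| = laguerreAtNegOne α ℓ := by
  rw [Finset.sum_congr rfl (fun j _ => abs_co α hα ℓ j)]
  rw [← Finset.sum_subset (Finset.range_subset_range.mpr hℓ)
      (fun x _ hx2 => by
        have : ℓ < x := by simp only [Finset.mem_range] at hx2; omega
        rw [co_eq_zero α this]; ring)]
  rw [laguerreAtNegOne, Finset.mul_sum]
  apply Finset.sum_congr rfl
  intro k _
  rw [co]
  ring

lemma laguerre_zero (α : ℝ) : laguerreAtNegOne α 0 = 1 := by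
  simp [laguerreAtNegOne, poch]

/-- Every eigenvalue (in particular the smallest) of the Hankel matrix
((α+1)_{j+k})_{0≤j,k≤n} is at least (Σ_{ℓ=0}^n (ℓ!/(α+1)_ℓ) L_ℓ^{(α)}(-1)²)⁻¹. -/
theorem stmt_3 (α : ℝ) (hα : -1 < α) (n : ℕ) (μ : ℝ)
    (hμ : Module.End.HasEigenvalue
      (Matrix.toLin' (Matrix.of fun j k : Fin (n+1) => poch (α+1) (j.1 + k.1))) μ) :
    (∑ ℓ ∈ Finset.range (n+1),
        (Nat.factorial ℓ : ℝ) / poch (α+1) ℓ * (laguerreAtNegOne α ℓ)^2)⁻¹ ≤ μ := by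
  have hα1 : 0 < α + 1 := by linarith
  set T := ∑ ℓ ∈ Finset.range (n+1),
      (Nat.factorial ℓ : ℝ) / poch (α+1) ℓ * (laguerreAtNegOne α ℓ)^2 with hT
  obtain ⟨v, hv⟩ := hμ.exists_hasEigenvector
  have hvne : v ≠ 0 := hv.right
  have hMv : (Mmat α n).mulVec v = μ • v := by
    rw [← Matrix.toLin'_apply]
    exact hv.apply_eq_smul
  haveI : Invertible (Bmat α n) :=
    invertibleOfRightInverse _ (Mmat α n * (Bmat α n)ᵀ)
      (by rw [← Matrix.mul_assoc]; exact ortho α hα1 n)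
  haveI : Invertible (Bmat α n)ᵀ := Matrix.invertibleTranspose _
  obtain ⟨u, hvu⟩ : ∃ u, (Bmat α n)ᵀ.mulVec u = v :=
    ⟨((Bmat α n)ᵀ)⁻¹.mulVec v,
      by rw [Matrix.mulVec_mulVec, Matrix.mul_inv_of_invertible, Matrix.one_mulVec]⟩
  have hune : u ≠ 0 := fun h => hvne (by rw [← hvu, h, Matrix.mulVec_zero])
  have huu : u ⬝ᵥ u = μ * (v ⬝ᵥ v) := by
    have h1 : v ⬝ᵥ (Mmat α n).mulVec v = μ * (v ⬝ᵥ v) := by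
      rw [hMv, dotProduct_smul, smul_eq_mul]
    have h2 : v ⬝ᵥ (Mmat α n).mulVec v = u ⬝ᵥ u := by
      rw [← hvu]
      rw [Matrix.mulVec_mulVec, Matrix.mulVec_transpose, Matrix.dotProduct_mulVec,
        Matrix.vecMul_vecMul, ← Matrix.mul_assoc, ortho α hα1 n, Matrix.vecMul_one]
    rw [← h1, h2]
  -- main bound : v ⬝ᵥ v ≤ T * (u ⬝ᵥ u)
  have huu0 : 0 ≤ u ⬝ᵥ u := Finset.sum_nonneg fun i _ => mul_self_nonneg _
  have hrow : ∀ ℓ : Fin (n+1), ∑ j : Fin (n+1), (Bmat α n ℓ j)^2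
      ≤ (Nat.factorial ℓ.1 : ℝ) / poch (α+1) ℓ.1 * (laguerreAtNegOne α ℓ.1)^2 := by
    intro ℓ
    have hsq : ∀ j : Fin (n+1), (Bmat α n ℓ j)^2 = sfac α ℓ.1 ^2 * |co α ℓ.1 j.1|^2 := by
      intro j
      simp only [Bmat, Matrix.of_apply]
      rw [mul_pow, sq_abs]
    rw [Finset.sum_congr rfl (fun j _ => hsq j), ← Finset.mul_sum]
    have hsf : sfac α ℓ.1 ^ 2 = (Nat.factorial ℓ.1 : ℝ) / poch (α+1) ℓ.1 := by
      rw [sfac, Real.sq_sqrt (div_nonneg (Nat.cast_nonneg _) (poch_pos hα1 _).le)]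
    rw [hsf]
    apply mul_le_mul_of_nonneg_left _ (div_nonneg (Nat.cast_nonneg _) (poch_pos hα1 _).le)
    have := Finset.sum_sq_le_sq_sum_of_nonneg
      (s := Finset.univ) (f := fun j : Fin (n+1) => |co α ℓ.1 j.1|)
      (fun j _ => abs_nonneg _)
    refine le_trans this ?_
    have : ∑ j : Fin (n+1), |co α ℓ.1 j.1| = laguerreAtNegOne α ℓ.1 := by
      rw [Fin.sum_univ_eq_sum_range (fun j => |co α ℓ.1 j|), rowsum α hα1 n ℓ.1 ℓ.isLt]
    rw [this]
  have hvv_le : v ⬝ᵥ v ≤ T * (u ⬝ᵥ u) := by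
    have hstep : ∀ j : Fin (n+1), v j * v j
        ≤ (∑ ℓ : Fin (n+1), (Bmat α n ℓ j)^2) * (u ⬝ᵥ u) := by
      intro j
      have hvj : v j = ∑ ℓ : Fin (n+1), Bmat α n ℓ j * u ℓ := by
        rw [← hvu]
        simp only [Matrix.mulVec, dotProduct, Matrix.transpose_apply]
      have hcs := Finset.sum_mul_sq_le_sq_mul_sq Finset.univ
        (fun ℓ : Fin (n+1) => Bmat α n ℓ j) u
      have huu' : u ⬝ᵥ u = ∑ ℓ : Fin (n+1), u ℓ ^ 2 := by
        simp [dotProduct, sq]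
      rw [hvj, huu', ← sq]
      exact hcs
    calc v ⬝ᵥ v = ∑ j : Fin (n+1), v j * v j := rfl
      _ ≤ ∑ j : Fin (n+1), (∑ ℓ : Fin (n+1), (Bmat α n ℓ j)^2) * (u ⬝ᵥ u) :=
          Finset.sum_le_sum fun j _ => hstep j
      _ = (∑ ℓ : Fin (n+1), ∑ j : Fin (n+1), (Bmat α n ℓ j)^2) * (u ⬝ᵥ u) := by
          rw [← Finset.sum_mul, Finset.sum_comm]
      _ ≤ (∑ ℓ : Fin (n+1), (Nat.factorial ℓ.1 : ℝ) / poch (α+1) ℓ.1 *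
            (laguerreAtNegOne α ℓ.1)^2) * (u ⬝ᵥ u) := by
          apply mul_le_mul_of_nonneg_right (Finset.sum_le_sum fun ℓ _ => hrow ℓ) huu0
      _ = T * (u ⬝ᵥ u) := by
          rw [hT, Fin.sum_univ_eq_sum_range
            (fun ℓ => (Nat.factorial ℓ : ℝ) / poch (α+1) ℓ * (laguerreAtNegOne α ℓ)^2)]
  have hvv0 : 0 < v ⬝ᵥ v := by
    have nn : 0 ≤ v ⬝ᵥ v := Finset.sum_nonneg fun i _ => mul_self_nonneg _
    exact lt_of_le_of_ne nn (fun h => hvne (dotProduct_self_eq_zero.mp h.symm))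
  have huu0' : 0 < u ⬝ᵥ u := by
    have nn : 0 ≤ u ⬝ᵥ u := huu0
    exact lt_of_le_of_ne nn (fun h => hune (dotProduct_self_eq_zero.mp h.symm))
  have hTpos : 0 < T := by
    rw [hT]
    apply Finset.sum_pos'
    · intro ℓ _
      exact mul_nonneg (div_nonneg (Nat.cast_nonneg _) (poch_pos hα1 _).le) (sq_nonneg _)
    · refine ⟨0, Finset.mem_range.mpr (Nat.succ_pos n), ?_⟩
      rw [laguerre_zero, poch_zero]
      norm_num
  have hkey : 1 ≤ T * μ := by
    have h1 : v ⬝ᵥ v ≤ T * (μ * (v ⬝ᵥ v)) := by rw [← huu]; exact hvv_le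
    nlinarith
  rw [show T⁻¹ = 1 / T from (one_div T).symm, div_le_iff₀ hTpos]
  linarith [hkey, mul_comm T μ]
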